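/- Let m be a positive integer, R₁ an invertible m×m real matrix, R₂ ∈ ℝᵐ a column vector, and set κ = R₁⁻¹R₂ ∈ ℝᵐ. Then the (m+1)×(m+1) block matrix [[R₁, R₂], [κᵗ, −1]] has determinant equal to −det(R₁)·(1 + ‖κ‖²), where ‖κ‖² = κᵗκ. In particular, if det(R₁) > 0 then this determinant is strictly negative. -/

import Mathlib

open Matrix

theorem det_bordered_block (m : ℕ) (hm : 0 < m)
    (R1 : Matrix (Fin m) (Fin m) ℝ) (hR1 : IsUnit R1.det) (R2 : Fin m → ℝ) :
    (Matrix.fromBlocks R1 (Matrix.replicateCol Unit R2)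
        (Matrix.replicateRow Unit (R1⁻¹.mulVec R2)) (-1 : Matrix Unit Unit ℝ)).det
      = -R1.det * (1 + ∑ i, (R1⁻¹.mulVec R2) i ^ 2)
    ∧ (0 < R1.det →
        (Matrix.fromBlocks R1 (Matrix.replicateCol Unit R2)
          (Matrix.replicateRow Unit (R1⁻¹.mulVec R2)) (-1 : Matrix Unit Unit ℝ)).det < 0) := by
  have hInv : Invertible R1 := R1.invertibleOfIsUnitDet hR1
  have hmain : (Matrix.fromBlocks R1 (Matrix.replicateCol Unit R2)
        (Matrix.replicateRow Unit (R1⁻¹.mulVec R2)) (-1 : Matrix Unit Unit ℝ)).det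
      = -R1.det * (1 + ∑ i, (R1⁻¹.mulVec R2) i ^ 2) := by
    rw [det_fromBlocks₁₁]
    have hinv : (⅟R1 : Matrix (Fin m) (Fin m) ℝ) = R1⁻¹ := (invOf_eq_nonsing_inv R1)
    rw [hinv]
    have h2 : Matrix.replicateRow Unit (R1⁻¹.mulVec R2) * R1⁻¹ * Matrix.replicateCol Unit R2
        = Matrix.replicateRow Unit (R1⁻¹.mulVec R2) * Matrix.replicateCol Unit (R1⁻¹.mulVec R2) := by
      rw [Matrix.mul_assoc, ← Matrix.replicateCol_mulVec]
    have h1 : ((-1 : Matrix Unit Unit ℝ) - Matrix.replicateRow Unit (R1⁻¹.mulVec R2) * R1⁻¹ * Matrix.replicateCol Unit R2).det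
        = -(1 + ∑ i, (R1⁻¹.mulVec R2) i ^ 2) := by
      rw [h2, Matrix.replicateRow_mul_replicateCol, det_unique]
      simp [dotProduct, sq]; ring
    rw [h1]; ring
  refine ⟨hmain, fun h => ?_⟩
  rw [hmain]
  have hsum : 0 ≤ ∑ i, (R1⁻¹.mulVec R2) i ^ 2 := Finset.sum_nonneg fun i _ => sq_nonneg _
  nlinarith
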